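/- Let Γ be a group whose every non-trivial element has infinite conjugacy class (i.c.c.), and let F be a finite subset of Γ not containing the identity. Then there exists t ∈ Γ such that tFt⁻¹ ∩ F = ∅. -/

import Mathlib

open scoped Pointwise

lemma conjclass_finite_of_finiteIndex {G : Type*} [Group G] (f : G)
    (h : (Subgroup.centralizer {f}).FiniteIndex) : {h : G | IsConj f h}.Finite := by
  haveI := h
  have hfin : Finite (G ⧸ Subgroup.centralizer {f}) :=
    Subgroup.finite_quotient_of_finiteIndex
  have hsub : {h : G | IsConj f h} ⊆
      Set.range (fun q : G ⧸ Subgroup.centralizer {f} => q.out * f * q.out⁻¹) := by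
    intro x hx
    obtain ⟨c, hc⟩ := isConj_iff.mp hx
    refine ⟨QuotientGroup.mk c, ?_⟩
    have hm : ((QuotientGroup.mk c : G ⧸ Subgroup.centralizer {f}).out)⁻¹ * c ∈
        Subgroup.centralizer {f} := by
      rw [← QuotientGroup.eq, QuotientGroup.out_eq']
    rw [Subgroup.mem_centralizer_iff] at hm
    have hcomm := hm f (Set.mem_singleton f)
    set t := (QuotientGroup.mk c : G ⧸ Subgroup.centralizer {f}).out with ht
    show t * f * t⁻¹ = x
    rw [← hc]
    have h2 : f * (t⁻¹ * c) = (t⁻¹ * c) * f := hcomm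
    calc t * f * t⁻¹ = t * (f * (t⁻¹ * c)) * c⁻¹ := by group
      _ = t * ((t⁻¹ * c) * f) * c⁻¹ := by rw [h2]
      _ = c * f * c⁻¹ := by group
  exact (Set.finite_range _).subset hsub

/-- If every nontrivial element of `G` has an infinite conjugacy class (i.c.c.),
then for every finite subset `F` of `G` not containing the identity there is `t ∈ G`
with `tFt⁻¹ ∩ F = ∅`. -/
theorem stmt0 {G : Type*} [Group G]
    (hicc : ∀ g : G, g ≠ 1 → {h : G | IsConj g h}.Infinite)
    (F : Finset G) (hF : (1 : G) ∉ F) :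
    ∃ t : G, ∀ f ∈ F, t * f * t⁻¹ ∉ F := by
  classical
  by_contra hcon
  push_neg at hcon
  -- Build a coset cover indexed by F × F
  set H : G × G → Subgroup G := fun p => Subgroup.centralizer {p.1} with hH
  set g : G × G → G := fun p =>
    if h : ∃ t : G, t * p.1 * t⁻¹ = p.2 then h.choose else 1 with hg
  have hcovers : ⋃ i ∈ F ×ˢ F, (g i) • (H i : Set G) = Set.univ := by
    rw [Set.eq_univ_iff_forall]
    intro t
    obtain ⟨f, hf, hft⟩ := hcon t
    have hmemP : (f, t * f * t⁻¹) ∈ F ×ˢ F := Finset.mem_product.mpr ⟨hf, hft⟩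
    refine Set.mem_biUnion hmemP ?_
    have hex : ∃ s : G, s * f * s⁻¹ = t * f * t⁻¹ := ⟨t, rfl⟩
    have hch := hex.choose_spec
    rw [mem_leftCoset_iff]
    have hgval : g (f, t * f * t⁻¹) = hex.choose := by simp [hg, hex]
    rw [hgval]
    rw [SetLike.mem_coe, hH, Subgroup.mem_centralizer_iff]
    intro x hx
    rw [Set.mem_singleton_iff] at hx
    rw [hx]
    set s := hex.choose with hs
    have heq : s * f * s⁻¹ = t * f * t⁻¹ := hch
    calc f * (s⁻¹ * t) = s⁻¹ * (s * f * s⁻¹) * t := by group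
      _ = s⁻¹ * (t * f * t⁻¹) * t := by rw [heq]
      _ = (s⁻¹ * t) * f := by group
  obtain ⟨k, hk, hfin⟩ := Subgroup.exists_finiteIndex_of_leftCoset_cover hcovers
  have hk1 : k.1 ∈ F := (Finset.mem_product.mp hk).1
  have hne : k.1 ≠ 1 := fun h => hF (h ▸ hk1)
  exact hicc k.1 hne (conjclass_finite_of_finiteIndex k.1 hfin)
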